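/- Let 0 < b₁ ≤ b₂ ≤ b₃ be real numbers and define f(x) = 6·Real.arcsin(1/(2·Real.cosh(x/2))) + 2·∑_{i=1}^{2} Real.arcsin(Real.cosh(b_i/2)/Real.cosh(x/2)). If f(b₃) > π, then there exists a unique x ∈ (b₃, ∞) satisfying f(x) + 2·Real.arcsin(Real.cosh(b₃/2)/Real.cosh(x/2)) = 2π. -/

import Mathlib

open Real Set

private lemma cosh_gt_half_exp (t : ℝ) : Real.exp t / 2 < Real.cosh t := by
  rw [Real.cosh_eq]
  have := Real.exp_pos (-t)
  linarith

private lemma arcsin_anti (c : ℝ) (hc : 0 < c) {b x y : ℝ} (hb : 0 < b)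
    (hcb : c ≤ Real.cosh (b / 2)) (hx : b ≤ x) (hxy : x < y) :
    Real.arcsin (c / Real.cosh (y / 2)) < Real.arcsin (c / Real.cosh (x / 2)) := by
  have hx0 : 0 < x := hb.trans_le hx
  have hcx : Real.cosh (x / 2) < Real.cosh (y / 2) := by
    rw [Real.cosh_lt_cosh, abs_of_pos (by linarith), abs_of_pos (by linarith)]
    linarith
  have hcxpos := Real.cosh_pos (x / 2)
  have hcypos := Real.cosh_pos (y / 2)
  have h1 : c / Real.cosh (y / 2) < c / Real.cosh (x / 2) :=
    div_lt_div_of_pos_left hc hcxpos hcx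
  have hle1 : c / Real.cosh (x / 2) ≤ 1 := by
    rw [div_le_one hcxpos]
    refine hcb.trans ?_
    rw [Real.cosh_le_cosh, abs_of_pos (by linarith), abs_of_pos (by linarith)]
    linarith
  have hy0 : 0 ≤ c / Real.cosh (y / 2) := le_of_lt (div_pos hc hcypos)
  exact Real.strictMonoOn_arcsin ⟨by linarith, by linarith⟩
    ⟨by linarith, hle1⟩ h1

private lemma arcsin_small (c X : ℝ) (hc : 0 < c) (hX : 2 * c < Real.cosh (X / 2)) :
    Real.arcsin (c / Real.cosh (X / 2)) < Real.pi / 6 := by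
  have hpi := Real.pi_pos
  have harcsin_half : Real.arcsin (1 / 2) = Real.pi / 6 := by
    rw [← Real.sin_pi_div_six, Real.arcsin_sin (by linarith) (by linarith)]
  have hcX := Real.cosh_pos (X / 2)
  have ht : c / Real.cosh (X / 2) < 1 / 2 := by
    rw [div_lt_div_iff₀ hcX (by norm_num)]
    linarith
  have ht0 : 0 < c / Real.cosh (X / 2) := div_pos hc hcX
  rw [← harcsin_half]
  exact Real.strictMonoOn_arcsin ⟨by linarith, by linarith⟩ (by norm_num) ht

/-- Theorem maximal sysloops, part (a), existence and uniqueness of the maximizer: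
if `0 < b₁ ≤ b₂ ≤ b₃` and `f(b₃) > π`, where
`f(x) = 6·arcsin(1/(2cosh(x/2))) + 2·arcsin(cosh(b₁/2)/cosh(x/2)) + 2·arcsin(cosh(b₂/2)/cosh(x/2))`,
then there is a unique `x ∈ (b₃, ∞)` with
`f(x) + 2·arcsin(cosh(b₃/2)/cosh(x/2)) = 2π`. -/
theorem stmt_4 (b₁ b₂ b₃ : ℝ) (hb₁ : 0 < b₁) (h12 : b₁ ≤ b₂) (h23 : b₂ ≤ b₃)
    (f : ℝ → ℝ)
    (hf : ∀ x, f x = 6 * Real.arcsin (1 / (2 * Real.cosh (x / 2)))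
      + 2 * (Real.arcsin (Real.cosh (b₁ / 2) / Real.cosh (x / 2))
        + Real.arcsin (Real.cosh (b₂ / 2) / Real.cosh (x / 2))))
    (h : Real.pi < f b₃) :
    ∃! x : ℝ, x ∈ Set.Ioi b₃ ∧
      f x + 2 * Real.arcsin (Real.cosh (b₃ / 2) / Real.cosh (x / 2)) = 2 * Real.pi := by
  have hb₃ : 0 < b₃ := hb₁.trans_le (h12.trans h23)
  set C := Real.cosh (b₃ / 2) with hC
  have hC1 : 1 ≤ C := Real.one_le_cosh _
  have hC1' : Real.cosh (b₁ / 2) ≤ C := by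
    rw [hC, Real.cosh_le_cosh, abs_of_pos (by linarith), abs_of_pos (by linarith)]
    linarith
  have hC2' : Real.cosh (b₂ / 2) ≤ C := by
    rw [hC, Real.cosh_le_cosh, abs_of_pos (by linarith), abs_of_pos (by linarith)]
    linarith
  have hcb1 : 0 < Real.cosh (b₁ / 2) := Real.cosh_pos _
  have hcb2 : 0 < Real.cosh (b₂ / 2) := Real.cosh_pos _
  set g : ℝ → ℝ := fun x => f x + 2 * Real.arcsin (C / Real.cosh (x / 2)) with hg
  have hrw : ∀ x, 1 / (2 * Real.cosh (x / 2)) = (1 / 2) / Real.cosh (x / 2) := by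
    intro x; rw [div_div]
  -- strict antitonicity on Ici b₃
  have hanti : StrictAntiOn g (Set.Ici b₃) := by
    intro x hx y hy hxy
    simp only [hg, hf, hrw]
    have t1 := arcsin_anti (1 / 2) (by norm_num) hb₃ (by linarith) hx hxy
    have t2 := arcsin_anti _ hcb1 hb₃ hC1' hx hxy
    have t3 := arcsin_anti _ hcb2 hb₃ hC2' hx hxy
    have t4 := arcsin_anti C (by linarith) hb₃ le_rfl hx hxy
    linarith
  -- continuity
  have hcosh : Continuous fun x : ℝ => Real.cosh (x / 2) :=
    Real.continuous_cosh.comp (continuous_id.div_const 2)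
  have hcont : Continuous g := by
    have harc : ∀ c : ℝ, Continuous fun x => Real.arcsin (c / Real.cosh (x / 2)) := fun c =>
      Real.continuous_arcsin.comp
        (continuous_const.div hcosh fun x => (Real.cosh_pos _).ne')
    have h0 : Continuous fun x : ℝ => Real.arcsin (1 / (2 * Real.cosh (x / 2))) := by
      simp only [hrw]; exact harc _
    have : Continuous fun x : ℝ => (6 * Real.arcsin (1 / (2 * Real.cosh (x / 2)))
        + 2 * (Real.arcsin (Real.cosh (b₁ / 2) / Real.cosh (x / 2))
          + Real.arcsin (Real.cosh (b₂ / 2) / Real.cosh (x / 2))))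
        + 2 * Real.arcsin (C / Real.cosh (x / 2)) := by
      exact (((continuous_const.mul h0).add
        (continuous_const.mul ((harc _).add (harc _)))).add
        (continuous_const.mul (harc _)))
    convert this using 2 with x
    rw [hg]
    simp only [hf]
  -- value at b₃
  have hgb₃ : 2 * Real.pi < g b₃ := by
    have : Real.arcsin (C / Real.cosh (b₃ / 2)) = Real.pi / 2 := by
      rw [← hC, div_self (by positivity : C ≠ 0), Real.arcsin_one]
    rw [hg]; dsimp only; rw [this]; linarith
  -- large point X
  set X : ℝ := 8 * C with hX
  have hXbig : 2 * C < Real.cosh (X / 2) := by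
    have h1 : Real.exp (X / 2) / 2 < Real.cosh (X / 2) := cosh_gt_half_exp _
    have h2 : X / 2 + 1 ≤ Real.exp (X / 2) := Real.add_one_le_exp _
    rw [hX] at h2 ⊢
    nlinarith
  have hXb₃ : b₃ < X := by
    have h1 : Real.exp (b₃ / 2) / 2 < C := cosh_gt_half_exp _
    have h2 : b₃ / 2 + 1 ≤ Real.exp (b₃ / 2) := Real.add_one_le_exp _
    rw [hX]; nlinarith
  have hgX : g X < 2 * Real.pi := by
    have t1 : Real.arcsin ((1 / 2) / Real.cosh (X / 2)) < Real.pi / 6 :=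
      arcsin_small _ _ (by norm_num) (by linarith)
    have t2 := arcsin_small _ X hcb1 (by linarith)
    have t3 := arcsin_small _ X hcb2 (by linarith)
    have t4 := arcsin_small C X (by linarith) hXbig
    rw [hg]; dsimp only; rw [hf, hrw]
    linarith
  -- existence via IVT
  obtain ⟨x, hxmem, hgx⟩ :=
    intermediate_value_Ioo' (le_of_lt hXb₃) hcont.continuousOn ⟨hgX, hgb₃⟩
  refine ⟨x, ⟨hxmem.1, hgx⟩, ?_⟩
  rintro y ⟨hy, hgy⟩
  have hgy' : g y = 2 * Real.pi := hgy
  exact hanti.injOn (Set.mem_Ici.mpr (le_of_lt (Set.mem_Ioi.mp hy))) (Set.mem_Ici.mpr (le_of_lt hxmem.1)) (hgy'.trans hgx.symm)
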